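/- Let α, β, γ, Λ be C² functions of η with α, β, γ never zero, and suppose they satisfy the three off-diagonal plane-wave equations α''/α = -2(Λ')² + (α'/α)(β'/β + γ'/γ), β''/β = -2(Λ')² + (β'/β)(α'/α + γ'/γ), γ''/γ = -2(Λ')² + (γ'/γ)(α'/α + β'/β). Then each of the quantities (ln(α/β))'·(αβ/γ), (ln(γ/α))'·(αγ/β), and (ln(β/γ))'·(βγ/α) is constant. -/

import Mathlib

lemma key_lemma (a b c Λ : ℝ → ℝ)
    (ha : ContDiff ℝ 2 a) (hb : ContDiff ℝ 2 b) (hc : ContDiff ℝ 2 c)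
    (ha0 : ∀ η, a η ≠ 0) (hb0 : ∀ η, b η ≠ 0) (hc0 : ∀ η, c η ≠ 0)
    (ea : ∀ η, deriv (deriv a) η / a η =
      -2 * (deriv Λ η) ^ 2 + (deriv a η / a η) * (deriv b η / b η + deriv c η / c η))
    (eb : ∀ η, deriv (deriv b) η / b η =
      -2 * (deriv Λ η) ^ 2 + (deriv b η / b η) * (deriv a η / a η + deriv c η / c η)) :
    ∃ C, ∀ η, deriv (fun t => Real.log (a t / b t)) η * (a η * b η / c η) = C := by
  have hda : Differentiable ℝ a := ha.differentiable (by norm_num)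
  have hdb : Differentiable ℝ b := hb.differentiable (by norm_num)
  have hdc : Differentiable ℝ c := hc.differentiable (by norm_num)
  have hda' : Differentiable ℝ (deriv a) := (contDiff_succ_iff_deriv.mp (show ContDiff ℝ (1+1) a by norm_num; exact ha)).2.2.differentiable one_ne_zero
  have hdb' : Differentiable ℝ (deriv b) := (contDiff_succ_iff_deriv.mp (show ContDiff ℝ (1+1) b by norm_num; exact hb)).2.2.differentiable one_ne_zero
  set g : ℝ → ℝ := fun t => (deriv a t * b t - a t * deriv b t) / c t with hg
  have hgd : ∀ η, HasDerivAt g 0 η := by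
    intro η
    have h1 : HasDerivAt (fun t => deriv a t * b t - a t * deriv b t)
        ((deriv (deriv a) η * b η + deriv a η * deriv b η)
          - (deriv a η * deriv b η + a η * deriv (deriv b) η)) η :=
      (((hda' η).hasDerivAt.mul (hdb _).hasDerivAt).sub
        ((hda _).hasDerivAt.mul (hdb' η).hasDerivAt))
    have h2 := h1.div (hdc _).hasDerivAt (hc0 η)
    refine h2.congr_deriv ?_
    symm
    have ha2 : deriv (deriv a) η = a η * (-2 * (deriv Λ η) ^ 2
        + (deriv a η / a η) * (deriv b η / b η + deriv c η / c η)) := by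
      rw [← ea η, mul_comm, div_mul_cancel₀ _ (ha0 η)]
    have hb2 : deriv (deriv b) η = b η * (-2 * (deriv Λ η) ^ 2
        + (deriv b η / b η) * (deriv a η / a η + deriv c η / c η)) := by
      rw [← eb η, mul_comm, div_mul_cancel₀ _ (hb0 η)]
    rw [ha2, hb2]
    field_simp [ha0 η, hb0 η, hc0 η]
    ring
  have hconst := is_const_of_deriv_eq_zero
    (fun x => (hgd x).differentiableAt) (fun x => (hgd x).deriv)
  refine ⟨g 0, fun η => ?_⟩
  have hlog : deriv (fun t => Real.log (a t / b t)) η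
      = deriv a η / a η - deriv b η / b η := by
    have : (fun t => Real.log (a t / b t)) = fun t => Real.log (a t) - Real.log (b t) := by
      funext t; rw [Real.log_div (ha0 t) (hb0 t)]
    rw [this]
    have h1 : HasDerivAt (fun t => Real.log (a t) - Real.log (b t))
        (deriv a η / a η - deriv b η / b η) η :=
      ((hda η).hasDerivAt.log (ha0 η)).sub ((hdb η).hasDerivAt.log (hb0 η))
    exact h1.deriv
  rw [hlog, ← hconst η 0]
  simp only [hg]
  field_simp [ha0 η, hb0 η, hc0 η]

/-- For C² never-vanishing α, β, γ satisfying the off-diagonal plane-wave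
Einstein equations, each of (ln(α/β))'·(αβ/γ), (ln(γ/α))'·(αγ/β) and
(ln(β/γ))'·(βγ/α) is constant. -/
theorem off_diagonal_first_integrals (α β γ Λ : ℝ → ℝ)
    (hα : ContDiff ℝ 2 α) (hβ : ContDiff ℝ 2 β) (hγ : ContDiff ℝ 2 γ)
    (hΛ : ContDiff ℝ 2 Λ)
    (hα0 : ∀ η, α η ≠ 0) (hβ0 : ∀ η, β η ≠ 0) (hγ0 : ∀ η, γ η ≠ 0)
    (e1 : ∀ η, deriv (deriv α) η / α η =
      -2 * (deriv Λ η) ^ 2 + (deriv α η / α η) * (deriv β η / β η + deriv γ η / γ η))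
    (e2 : ∀ η, deriv (deriv β) η / β η =
      -2 * (deriv Λ η) ^ 2 + (deriv β η / β η) * (deriv α η / α η + deriv γ η / γ η))
    (e3 : ∀ η, deriv (deriv γ) η / γ η =
      -2 * (deriv Λ η) ^ 2 + (deriv γ η / γ η) * (deriv α η / α η + deriv β η / β η)) :
    (∃ C₁, ∀ η, deriv (fun t => Real.log (α t / β t)) η * (α η * β η / γ η) = C₁) ∧
    (∃ C₂, ∀ η, deriv (fun t => Real.log (γ t / α t)) η * (α η * γ η / β η) = C₂) ∧
    (∃ C₃, ∀ η, deriv (fun t => Real.log (β t / γ t)) η * (β η * γ η / α η) = C₃) := by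
  refine ⟨key_lemma α β γ Λ hα hβ hγ hα0 hβ0 hγ0 e1 e2, ?_, ?_⟩
  · obtain ⟨C, h⟩ := key_lemma γ α β Λ hγ hα hβ hγ0 hα0 hβ0 e3
      (fun η => by rw [e1 η]; ring)
    exact ⟨C, fun η => by rw [mul_comm (α η) (γ η)]; exact h η⟩
  · obtain ⟨C, h⟩ := key_lemma β γ α Λ hβ hγ hα hβ0 hγ0 hα0
      (fun η => by rw [e2 η]; ring) (fun η => by rw [e3 η]; ring)
    exact ⟨C, h⟩
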